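/- Let P be a finite partially ordered set with |P| = n ≥ 1 and let Z_P be its zeta matrix over ℤ. For 1 ≤ s ≤ n define c_s = Σ 2^{k_σ}, the sum taken over all permutations σ of P such that a is comparable to σ(a) for every a ∈ P and such that k_σ + r_σ = s, where k_σ is the number of fixed points of σ and r_σ is the number of cycles of σ of length greater than 1. Then det(Z_P + Z_Pᵀ) = Σ_{s=1}^{n} (−1)^{n−s} c_s. -/

import Mathlib

open Matrix

/-- For a finite poset `P` with `|P| = n ≥ 1` and zeta matrix `Z_P` over `ℤ`,
`det (Z_P + Z_Pᵀ) = ∑_{s=1}^n (-1)^{n-s} c_s`, where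
`c_s = ∑ 2^{k_σ}` over permutations `σ` of `P` with `a` comparable to `σ a` for all `a`
and `k_σ + r_σ = s` (`k_σ` = number of fixed points, `r_σ` = number of nontrivial cycles). -/
theorem det_zeta_add_transpose_eq_alternating_sum
    (P : Type*) [Fintype P] [PartialOrder P] [DecidableEq P]
    [DecidableRel ((· ≤ ·) : P → P → Prop)]
    (hn : 1 ≤ Fintype.card P)
    (Z : Matrix P P ℤ)
    (hZ : Z = Matrix.of fun a b : P => if a ≤ b then (1 : ℤ) else 0) :
    (Z + Zᵀ).det
      = ∑ s ∈ Finset.Icc 1 (Fintype.card P),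
          (-1 : ℤ) ^ (Fintype.card P - s) *
            ∑ σ ∈ Finset.univ.filter
                (fun σ : Equiv.Perm P =>
                  (∀ a : P, a ≤ σ a ∨ σ a ≤ a) ∧
                  (Finset.univ.filter fun a : P => σ a = a).card
                      + Multiset.card σ.cycleType = s),
              (2 : ℤ) ^ (Finset.univ.filter fun a : P => σ a = a).card := by
  classical
  set n := Fintype.card P with hncard
  set k : Equiv.Perm P → ℕ := fun σ => (Finset.univ.filter fun a : P => σ a = a).card with hk
  set r : Equiv.Perm P → ℕ := fun σ => Multiset.card σ.cycleType with hr
  have hfix : ∀ σ : Equiv.Perm P, (Finset.univ.filter fun a : P => σ a = a) = σ.supportᶜ := by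
    intro σ; ext a; simp [Equiv.Perm.mem_support]
  have hkcompl : ∀ σ : Equiv.Perm P, k σ = n - σ.support.card := by
    intro σ; simp only [hk, hfix, Finset.card_compl]; rfl
  have hsupk : ∀ σ : Equiv.Perm P, σ.support.card = n - k σ := by
    intro σ
    rw [hkcompl]
    have := Finset.card_le_univ σ.support
    omega
  have hkn : ∀ σ : Equiv.Perm P, k σ ≤ n := fun σ => by
    rw [hk]; exact Finset.card_le_univ _
  have hrsup : ∀ σ : Equiv.Perm P, r σ ≤ n - k σ := by
    intro σ
    have hsum : σ.cycleType.sum = n - k σ := by rw [Equiv.Perm.sum_cycleType, hsupk]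
    rw [← hsum, hr]
    have h1 : ∀ x ∈ σ.cycleType, 1 ≤ x := fun x hx =>
      le_of_lt (Equiv.Perm.one_lt_of_mem_cycleType hx)
    simpa using Multiset.card_nsmul_le_sum h1
  -- product computation
  have hprod : ∀ σ : Equiv.Perm P,
      (∏ a : P, (Z + Zᵀ) (σ a) a)
        = if (∀ a : P, a ≤ σ a ∨ σ a ≤ a) then (2 : ℤ) ^ k σ else 0 := by
    intro σ
    by_cases hC : ∀ a : P, a ≤ σ a ∨ σ a ≤ a
    · rw [if_pos hC]
      have key : ∀ a : P, (Z + Zᵀ) (σ a) a = if σ a = a then 2 else 1 := by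
        intro a
        simp only [hZ, Matrix.add_apply, Matrix.transpose_apply, Matrix.of_apply]
        by_cases h : σ a = a
        · simp [h]
        · rw [if_neg h]
          rcases hC a with h1 | h1
          · rw [if_neg (fun h2 => h (le_antisymm h2 h1)), if_pos h1]
            norm_num
          · rw [if_pos h1, if_neg (fun h2 => h (le_antisymm h1 h2))]
            norm_num
      rw [Finset.prod_congr rfl fun a _ => key a, Finset.prod_ite, Finset.prod_const,
        Finset.prod_const, one_pow, mul_one, hk]
    · rw [if_neg hC]
      push_neg at hC
      obtain ⟨a, h1, h2⟩ := hC
      refine Finset.prod_eq_zero (Finset.mem_univ a) ?_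
      simp only [hZ, Matrix.add_apply, Matrix.transpose_apply, Matrix.of_apply,
        if_neg h1, if_neg h2, add_zero]
  -- sign computation
  have hsign : ∀ σ : Equiv.Perm P,
      ((Equiv.Perm.sign σ : ℤˣ) : ℤ) = (-1 : ℤ) ^ (n - (k σ + r σ)) := by
    intro σ
    have h1 : (Equiv.Perm.sign σ : ℤˣ) = (-1 : ℤˣ) ^ (σ.cycleType.sum + r σ) :=
      Equiv.Perm.sign_of_cycleType σ
    have hsum : σ.cycleType.sum = n - k σ := by rw [Equiv.Perm.sum_cycleType, hsupk]
    have hrle := hrsup σ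
    have h2 : ((Equiv.Perm.sign σ : ℤˣ) : ℤ) = (-1 : ℤ) ^ (σ.cycleType.sum + r σ) := by
      rw [h1]; push_cast; ring
    rw [h2, hsum]
    have h3 : n - (k σ + r σ) = (n - k σ) - r σ := by omega
    rw [h3]
    have heven : ((n - k σ) + r σ) % 2 = ((n - k σ) - r σ) % 2 := by omega
    rw [neg_one_pow_eq_pow_mod_two, heven, ← neg_one_pow_eq_pow_mod_two]
  -- main computation
  rw [Matrix.det_apply]
  have step1 : ∑ σ : Equiv.Perm P, Equiv.Perm.sign σ • ∏ a : P, (Z + Zᵀ) (σ a) a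
      = ∑ σ ∈ Finset.univ.filter (fun σ : Equiv.Perm P => ∀ a : P, a ≤ σ a ∨ σ a ≤ a),
          (-1 : ℤ) ^ (n - (k σ + r σ)) * (2 : ℤ) ^ k σ := by
    rw [← Finset.sum_filter_add_sum_filter_not Finset.univ
      (fun σ : Equiv.Perm P => ∀ a : P, a ≤ σ a ∨ σ a ≤ a)]
    have hz : ∑ σ ∈ Finset.univ.filter (fun σ : Equiv.Perm P => ¬ ∀ a : P, a ≤ σ a ∨ σ a ≤ a),
        Equiv.Perm.sign σ • ∏ a : P, (Z + Zᵀ) (σ a) a = 0 := by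
      refine Finset.sum_eq_zero fun σ hσ => ?_
      rw [Finset.mem_filter] at hσ
      rw [hprod σ, if_neg hσ.2, smul_zero]
    rw [hz, add_zero]
    refine Finset.sum_congr rfl fun σ hσ => ?_
    rw [Finset.mem_filter] at hσ
    rw [hprod σ, if_pos hσ.2, Units.smul_def, zsmul_eq_mul, hsign σ]
    push_cast
    ring
  rw [step1]
  -- fiberwise regroup
  have hmaps : ∀ σ ∈ Finset.univ.filter (fun σ : Equiv.Perm P => ∀ a : P, a ≤ σ a ∨ σ a ≤ a),
      k σ + r σ ∈ Finset.Icc 1 n := by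
    intro σ _
    rw [Finset.mem_Icc]
    have hub : k σ + r σ ≤ n := by
      have := hrsup σ
      have := hkn σ
      omega
    refine ⟨?_, hub⟩
    by_cases h1 : σ = 1
    · subst h1
      have hk1 : k 1 = n := by
        simp only [hk]
        simp [hncard]
      omega
    · have : 1 ≤ r σ := Equiv.Perm.card_cycleType_pos.mpr h1
      omega
  rw [← Finset.sum_fiberwise_of_maps_to hmaps
    (fun σ => (-1 : ℤ) ^ (n - (k σ + r σ)) * (2 : ℤ) ^ k σ)]
  refine Finset.sum_congr rfl fun s hs => ?_
  rw [Finset.mul_sum]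
  rw [show (Finset.univ.filter
        (fun σ : Equiv.Perm P =>
          (∀ a : P, a ≤ σ a ∨ σ a ≤ a) ∧ k σ + r σ = s))
      = (Finset.univ.filter (fun σ : Equiv.Perm P => ∀ a : P, a ≤ σ a ∨ σ a ≤ a)).filter
          (fun σ => k σ + r σ = s) from by rw [Finset.filter_filter]]
  refine Finset.sum_congr rfl fun σ hσ => ?_
  rw [Finset.mem_filter] at hσ
  rw [hσ.2]
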